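/- arXiv:1805.12205 — 6 statements merged into one kernel-verified Lean document; each statement's English description precedes it below -/
import Mathlib

section
/- The set G = { f⁻¹ ∘ g : f, g ∈ S } of composites of extended actions and their inverses forms a commutative group of bijections on P(X,S). -/
def PQRel {X : Type*} (S : Set (X → X)) : (X × S) → (X × S) → Prop :=
  fun a b => (b.2 : X → X) a.1 = (a.2 : X → X) b.1

/-- `H` is the map `f⁻¹ ∘ g` on `P(X,S)`, i.e. `H [(x,h)] = [(g x, f ∘ h)]`. -/
def IsQuotAct {X : Type*} (S : Set (X → X))
    (hcomp : ∀ f ∈ S, ∀ g ∈ S, f ∘ g ∈ S)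
    (H : Quot (PQRel S) → Quot (PQRel S)) : Prop :=
  ∃ f, ∃ hf : f ∈ S, ∃ g, g ∈ S ∧
    ∀ (x : X) (h : S), H (Quot.mk (PQRel S) (x, h)) =
      Quot.mk (PQRel S) (g x, ⟨f ∘ (h : X → X), hcomp f hf _ h.2⟩)

/-- The canonical action `[(x,h)] ↦ [(g x, f ∘ h)]`. -/
def quotAct {X : Type*} (S : Set (X → X))
    (hcomp : ∀ f ∈ S, ∀ g ∈ S, f ∘ g ∈ S)
    (hcomm : ∀ f ∈ S, ∀ g ∈ S, f ∘ g = g ∘ f)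
    (f : X → X) (hf : f ∈ S) (g : X → X) (hg : g ∈ S) :
    Quot (PQRel S) → Quot (PQRel S) :=
  Quot.lift
    (fun p => Quot.mk (PQRel S) (g p.1, ⟨f ∘ (p.2 : X → X), hcomp f hf _ p.2.2⟩))
    (by
      rintro ⟨x, h⟩ ⟨y, k⟩ hrel
      apply Quot.sound
      show (f ∘ (k : X → X)) (g x) = (f ∘ (h : X → X)) (g y)
      have h1 : (k : X → X) (g x) = g ((k : X → X) x) := congrFun (hcomm k k.2 g hg) x
      have h2 : (h : X → X) (g y) = g ((h : X → X) y) := congrFun (hcomm h h.2 g hg) y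
      simp only [Function.comp_apply, h1, h2]
      rw [hrel])

theorem quotAct_isQuotAct {X : Type*} (S : Set (X → X))
    (hcomp : ∀ f ∈ S, ∀ g ∈ S, f ∘ g ∈ S)
    (hcomm : ∀ f ∈ S, ∀ g ∈ S, f ∘ g = g ∘ f)
    (f : X → X) (hf : f ∈ S) (g : X → X) (hg : g ∈ S) :
    IsQuotAct S hcomp (quotAct S hcomp hcomm f hf g hg) :=
  ⟨f, hf, g, hg, fun _ _ => rfl⟩

/-- `G = {f⁻¹ ∘ g : f, g ∈ S}` is a commutative group of bijections
acting on `P(X,S)`. -/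
theorem G_comm_group_of_bijections {X : Type*} (S : Set (X → X))
    (hne : S.Nonempty)
    (hinj : ∀ f ∈ S, Function.Injective f)
    (hcomp : ∀ f ∈ S, ∀ g ∈ S, f ∘ g ∈ S)
    (hcomm : ∀ f ∈ S, ∀ g ∈ S, f ∘ g = g ∘ f) :
    (∀ H, IsQuotAct S hcomp H → Function.Bijective H) ∧
    (∀ H K, IsQuotAct S hcomp H → IsQuotAct S hcomp K →
      IsQuotAct S hcomp (H ∘ K) ∧ H ∘ K = K ∘ H) ∧
    (IsQuotAct S hcomp id) ∧
    (∀ H, IsQuotAct S hcomp H →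
      ∃ K, IsQuotAct S hcomp K ∧ H ∘ K = id ∧ K ∘ H = id) := by
  -- Key cancellation lemma: [(g (f x), f∘g∘h)] = [(x, h)]
  have cancel : ∀ (f : X → X), f ∈ S → ∀ (g : X → X), g ∈ S → ∀ (x : X) (h : S)
      (hm : f ∘ g ∘ (h : X → X) ∈ S),
      Quot.mk (PQRel S) (g (f x), (⟨f ∘ g ∘ (h : X → X), hm⟩ : S)) =
        Quot.mk (PQRel S) (x, h) := by
    intro f hf g hg x h hm
    apply Quot.sound
    show (h : X → X) (g (f x)) = (f ∘ g ∘ (h : X → X)) x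
    have hfg : f ∘ g ∈ S := hcomp f hf g hg
    calc (h : X → X) (g (f x)) = (h : X → X) ((f ∘ g) x) := by
          rw [show g (f x) = (f ∘ g) x from congrFun (hcomm g hg f hf) x]
      _ = ((f ∘ g) ∘ (h : X → X)) x := (congrFun (hcomm (f ∘ g) hfg h h.2) x).symm
      _ = (f ∘ g ∘ (h : X → X)) x := rfl
  -- Inverse clause first
  have hinv : ∀ H, IsQuotAct S hcomp H →
      ∃ K, IsQuotAct S hcomp K ∧ H ∘ K = id ∧ K ∘ H = id := by
    rintro H ⟨f, hf, g, hg, hH⟩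
    refine ⟨quotAct S hcomp hcomm g hg f hf, quotAct_isQuotAct S hcomp hcomm g hg f hf, ?_, ?_⟩
    · funext q
      induction q using Quot.ind with
      | mk p =>
        obtain ⟨x, h⟩ := p
        show H (quotAct S hcomp hcomm g hg f hf (Quot.mk _ (x, h))) = Quot.mk _ (x, h)
        show H (Quot.mk (PQRel S) (f x, ⟨g ∘ (h : X → X), hcomp g hg _ h.2⟩)) = _
        rw [hH]
        exact cancel f hf g hg x h _
    · funext q
      induction q using Quot.ind with
      | mk p =>
        obtain ⟨x, h⟩ := p
        show quotAct S hcomp hcomm g hg f hf (H (Quot.mk _ (x, h))) = Quot.mk _ (x, h)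
        rw [hH]
        show Quot.mk (PQRel S) (f (g x), ⟨g ∘ f ∘ (h : X → X), _⟩) = _
        exact cancel g hg f hf x h _
  refine ⟨?_, ?_, ?_, hinv⟩
  · intro H hH
    obtain ⟨K, _, hHK, hKH⟩ := hinv H hH
    exact Function.bijective_iff_has_inverse.mpr
      ⟨K, fun x => congrFun hKH x, fun x => congrFun hHK x⟩
  · rintro H K ⟨f, hf, g, hg, hH⟩ ⟨f', hf', g', hg', hK⟩
    constructor
    · refine ⟨f ∘ f', hcomp f hf f' hf', g ∘ g', hcomp g hg g' hg', fun x h => ?_⟩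
      show H (K (Quot.mk _ (x, h))) = _
      rw [hK, hH]
      rfl
    · funext q
      induction q using Quot.ind with
      | mk p =>
        obtain ⟨x, h⟩ := p
        show H (K (Quot.mk _ (x, h))) = K (H (Quot.mk _ (x, h)))
        rw [hK, hH, hH, hK]
        have e1 : g (g' x) = g' (g x) := congrFun (hcomm g hg g' hg') x
        have e2 : f ∘ f' ∘ (h : X → X) = f' ∘ f ∘ (h : X → X) := by
          rw [← Function.comp_assoc, ← Function.comp_assoc, hcomm f hf f' hf']
        congr 1
        exact Prod.ext e1 (Subtype.ext e2)
  · obtain ⟨e, he⟩ := hne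
    refine ⟨e, he, e, he, fun x h => ?_⟩
    show Quot.mk (PQRel S) (x, h) = Quot.mk (PQRel S) (e x, ⟨e ∘ (h : X → X), _⟩)
    apply Quot.sound
    show (e ∘ (h : X → X)) x = (h : X → X) (e x)
    exact congrFun (hcomm e he h h.2) x
end

section
/- If A ⊂ B are subsets of P(X,S) with g(A) ⊆ X measurable for some g ∈ S, and f(B) ⊆ X is measurable for some f ∈ S, then f(A) ⊆ X and f(A) is measurable. -/
def IsAct {X : Type*} (S : Set (X → X)) (f : X → X)
    (F : Quot (PQRel S) → Quot (PQRel S)) : Prop :=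
  ∀ (x : X) (g : S), F (Quot.mk (PQRel S) (x, g)) = Quot.mk (PQRel S) (f x, g)

def IsIota {X : Type*} (S : Set (X → X)) (ι : X → Quot (PQRel S)) : Prop :=
  ∀ (x : X) (h : S), ι x = Quot.mk (PQRel S) ((h : X → X) x, h)

open Function Set

theorem preimage_image_eq_of_semiconj {α β : Type*} {ι : α → β} {f g : α → α}
    {F G : β → β} (hι : Injective ι) (hG : Injective G) (hFG : Function.Commute F G)
    (hf : Semiconj ι f F) (hg : Semiconj ι g G) {A : Set β} (hA : G '' A ⊆ range ι) :
    ι ⁻¹' (F '' A) = g ⁻¹' (f '' (ι ⁻¹' (G '' A))) := by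
  ext z
  constructor
  · rintro ⟨a, haA, ha⟩
    obtain ⟨y, hy⟩ := hA ⟨a, haA, rfl⟩
    refine ⟨y, ⟨a, haA, hy.symm⟩, hι ?_⟩
    rw [hf.eq, hy, hFG.eq, ha, hg.eq]
  · rintro ⟨y, ⟨a, haA, hy⟩, hfy⟩
    refine ⟨a, haA, hG ?_⟩
    rw [← hFG.eq, hy, ← hf.eq, hfy, hg.eq]

section Pseudoquotient

variable {X : Type*} {S : Set (X → X)}

namespace PQRel

theorem equivalence (hinj : ∀ f ∈ S, Injective f)
    (hcomm : ∀ f ∈ S, ∀ g ∈ S, Function.Commute f g) :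
    Equivalence (PQRel S) where
  refl _ := rfl
  symm h := h.symm
  trans {x y z} hxy hyz := hinj y.2 y.2.2 <| calc
    y.2.1 (z.2.1 x.1) = z.2.1 (y.2.1 x.1) := hcomm _ y.2.2 _ z.2.2 _
    _ = z.2.1 (x.2.1 y.1) := congrArg _ hxy
    _ = x.2.1 (z.2.1 y.1) := hcomm _ z.2.2 _ x.2.2 _
    _ = x.2.1 (y.2.1 z.1) := congrArg _ hyz
    _ = y.2.1 (x.2.1 z.1) := hcomm _ x.2.2 _ y.2.2 _

theorem mk_eq_mk_iff (hinj : ∀ f ∈ S, Injective f)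
    (hcomm : ∀ f ∈ S, ∀ g ∈ S, Function.Commute f g) {a b : X × S} :
    Quot.mk (PQRel S) a = Quot.mk (PQRel S) b ↔ PQRel S a b :=
  Quot.eq.trans (equivalence hinj hcomm).eqvGen_iff

end PQRel

theorem IsIota.injective {ι : X → Quot (PQRel S)} (hι : IsIota S ι)
    (hinj : ∀ f ∈ S, Injective f) (hcomm : ∀ f ∈ S, ∀ g ∈ S, Function.Commute f g)
    (h : S) : Injective ι := by
  intro x y hxy
  rw [hι x h, hι y h, PQRel.mk_eq_mk_iff hinj hcomm] at hxy
  exact hinj h h.2 (hinj h h.2 hxy)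

namespace IsAct

variable {f g : X → X} {F G : Quot (PQRel S) → Quot (PQRel S)}

theorem semiconj_iota (hF : IsAct S f F) {ι : X → Quot (PQRel S)} (hι : IsIota S ι) (h : S)
    (hfh : Function.Commute f h) : Semiconj ι f F := by
  intro x
  rw [hι x h, hF, hι (f x) h, hfh x]

theorem injective (hF : IsAct S f F) (hinj : ∀ f ∈ S, Injective f)
    (hcomm : ∀ f ∈ S, ∀ g ∈ S, Function.Commute f g) (hf : Injective f)
    (hfS : ∀ h ∈ S, Function.Commute f h) : Injective F := by
  rintro ⟨a⟩ ⟨b⟩ hab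
  rw [hF, hF, PQRel.mk_eq_mk_iff hinj hcomm] at hab
  rw [PQRel.mk_eq_mk_iff hinj hcomm]
  apply hf
  rw [hfS _ b.2.2 a.1, hfS _ a.2.2 b.1]
  exact hab

theorem commute (hF : IsAct S f F) (hG : IsAct S g G) (hfg : Function.Commute f g) :
    Function.Commute F G := by
  rintro ⟨a⟩
  rw [hG, hF, hF, hG, hfg a.1]

end IsAct

end Pseudoquotient

theorem lemma_subset_measurable_general {X : Type*} [MeasurableSpace X] (S : Set (X → X))
    (hinj : ∀ f ∈ S, Function.Injective f)
    (hcomm : ∀ f ∈ S, ∀ g ∈ S, f ∘ g = g ∘ f)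
    (hmeas : ∀ f ∈ S, Measurable f)
    (himg : ∀ f ∈ S, ∀ E : Set X, MeasurableSet E → MeasurableSet (f '' E))
    (ι : X → Quot (PQRel S)) (hι : IsIota S ι)
    (A B : Set (Quot (PQRel S))) (hAB : A ⊆ B)
    (g : X → X) (hg : g ∈ S) (Fg : Quot (PQRel S) → Quot (PQRel S))
    (hFg : IsAct S g Fg)
    (hgA : Fg '' A ⊆ Set.range ι) (hgAmeas : MeasurableSet (ι ⁻¹' (Fg '' A)))
    (f : X → X) (hf : f ∈ S) (Ff : Quot (PQRel S) → Quot (PQRel S))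
    (hFf : IsAct S f Ff)
    (hfB : Ff '' B ⊆ Set.range ι) :
    Ff '' A ⊆ Set.range ι ∧ MeasurableSet (ι ⁻¹' (Ff '' A)) := by
  have hcommute : ∀ u ∈ S, ∀ v ∈ S, Function.Commute u v := fun u hu v hv =>
    congrFun (hcomm u hu v hv)
  have hfg : Function.Commute f g := hcommute f hf g hg
  have hpreimage : ι ⁻¹' (Ff '' A) = g ⁻¹' (f '' (ι ⁻¹' (Fg '' A))) :=
    preimage_image_eq_of_semiconj (hι.injective hinj hcommute ⟨g, hg⟩)
      (hFg.injective hinj hcommute (hinj g hg) (hcommute g hg)) (hFf.commute hFg hfg)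
      (hFf.semiconj_iota hι ⟨g, hg⟩ hfg) 
      (hFg.semiconj_iota hι ⟨g, hg⟩ (Function.Commute.refl g)) hgA
  refine ⟨(image_mono hAB).trans hfB, ?_⟩
  rw [hpreimage]
  exact hmeas g hg (himg f hf _ hgAmeas)

/-- if `A ⊆ B ⊆ P(X,S)`, `g(A) ⊆ X` is measurable for some `g ∈ S`,
and `f(B) ⊆ X` is measurable for some `f ∈ S`, then `f(A) ⊆ X` and `f(A)` is
measurable. -/
theorem lemma_subset_measurable {X : Type*} [MeasurableSpace X] (S : Set (X → X))
    (hinj : ∀ f ∈ S, Function.Injective f)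
    (hcomp : ∀ f ∈ S, ∀ g ∈ S, f ∘ g ∈ S)
    (hcomm : ∀ f ∈ S, ∀ g ∈ S, f ∘ g = g ∘ f)
    (hmeas : ∀ f ∈ S, Measurable f)
    (himg : ∀ f ∈ S, ∀ E : Set X, MeasurableSet E → MeasurableSet (f '' E))
    (ι : X → Quot (PQRel S)) (hι : IsIota S ι)
    (A B : Set (Quot (PQRel S))) (hAB : A ⊆ B)
    (g : X → X) (hg : g ∈ S) (Fg : Quot (PQRel S) → Quot (PQRel S))
    (hFg : IsAct S g Fg)
    (hgA : Fg '' A ⊆ Set.range ι) (hgAmeas : MeasurableSet (ι ⁻¹' (Fg '' A)))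
    (f : X → X) (hf : f ∈ S) (Ff : Quot (PQRel S) → Quot (PQRel S))
    (hFf : IsAct S f Ff)
    (hfB : Ff '' B ⊆ Set.range ι) (hfBmeas : MeasurableSet (ι ⁻¹' (Ff '' B))) :
    Ff '' A ⊆ Set.range ι ∧ MeasurableSet (ι ⁻¹' (Ff '' A)) :=
  lemma_subset_measurable_general S hinj hcomm hmeas himg ι hι A B hAB g hg Fg hFg hgA hgAmeas f hf
    Ff hFf hfB
end

section
/- Every element of the group G of bijections on P(X,S) is measurable with respect to the collection B = {A ⊆ P(X,S) : f(A) ⊆ X and f(A) ∈ Σ for some f ∈ S}, i.e., for every h ∈ G and A ∈ B, h(A) ∈ B. -/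
/-- `A ∈ B`: `f(A) ⊆ X` and `f(A) ∈ Σ` for some `f ∈ S`. -/
def MemB {X : Type*} [MeasurableSpace X] (S : Set (X → X))
    (ι : X → Quot (PQRel S)) (A : Set (Quot (PQRel S))) : Prop :=
  ∃ f ∈ S, ∃ F, IsAct S f F ∧ F '' A ⊆ Set.range ι ∧ MeasurableSet (ι ⁻¹' (F '' A))

/-- every element of `G` is measurable with respect to the
collection `B`: for `H ∈ G` and `A ∈ B`, `H(A) ∈ B`. -/
theorem G_measurable_wrt_B {X : Type*} [MeasurableSpace X] (S : Set (X → X))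
    (hinj : ∀ f ∈ S, Function.Injective f)
    (hcomp : ∀ f ∈ S, ∀ g ∈ S, f ∘ g ∈ S)
    (hcomm : ∀ f ∈ S, ∀ g ∈ S, f ∘ g = g ∘ f)
    (hmeas : ∀ f ∈ S, Measurable f)
    (himg : ∀ f ∈ S, ∀ E : Set X, MeasurableSet E → MeasurableSet (f '' E))
    (ι : X → Quot (PQRel S)) (hι : IsIota S ι)
    (H : Quot (PQRel S) → Quot (PQRel S)) (hH : IsQuotAct S hcomp H)
    (A : Set (Quot (PQRel S))) (hA : MemB S ι A) :
    MemB S ι (H '' A) := by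
  obtain ⟨f, hf, g, hg, hHdef⟩ := hH
  obtain ⟨f₀, hf₀, F, hF, hFsub, hFmeas⟩ := hA
  -- pointwise commutativity
  have hc : ∀ u ∈ S, ∀ v ∈ S, ∀ z : X, u (v z) = v (u z) :=
    fun u hu v hv z => congrFun (hcomm u hu v hv) z
  -- PQRel is an equivalence relation
  have hequiv : Equivalence (PQRel S) := by
    constructor
    · rintro ⟨a, k⟩; rfl
    · rintro ⟨a, k⟩ ⟨b, l⟩ h; exact h.symm
    · rintro ⟨a, k⟩ ⟨b, l⟩ ⟨c, m⟩ h1 h2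
      have h1' : (l : X → X) a = (k : X → X) b := h1
      have h2' : (m : X → X) b = (l : X → X) c := h2
      show (m : X → X) a = (k : X → X) c
      apply hinj (l : X → X) l.2
      calc (l : X → X) ((m : X → X) a) = (m : X → X) ((l : X → X) a) :=
            hc _ l.2 _ m.2 a
        _ = (m : X → X) ((k : X → X) b) := by rw [h1']
        _ = (k : X → X) ((m : X → X) b) := (hc _ k.2 _ m.2 b).symm
        _ = (k : X → X) ((l : X → X) c) := by rw [h2']
        _ = (l : X → X) ((k : X → X) c) := (hc _ l.2 _ k.2 c).symm
  have hmk : ∀ a b : X × S, Quot.mk (PQRel S) a = Quot.mk (PQRel S) b → PQRel S a b :=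
    fun a b h => (hequiv.eqvGen_iff).mp (Quot.eq.mp h)
  -- ι is injective
  have hιinj : Function.Injective ι := by
    intro x y hxy
    rw [hι x ⟨f, hf⟩, hι y ⟨f, hf⟩] at hxy
    have h := hmk _ _ hxy
    exact hinj f hf (hinj f hf h)
  set f' : X → X := f₀ ∘ f with hf'def
  have hf' : f' ∈ S := hcomp f₀ hf₀ f hf
  set E : Set X := ι ⁻¹' (F '' A) with hE
  -- the lifted action of f'
  have hwd : ∀ a b : X × S, PQRel S a b →
      Quot.mk (PQRel S) (f' a.1, a.2) = Quot.mk (PQRel S) (f' b.1, b.2) := by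
    rintro ⟨a, k⟩ ⟨b, l⟩ h
    have h' : (l : X → X) a = (k : X → X) b := h
    apply Quot.sound
    show (l : X → X) (f' a) = (k : X → X) (f' b)
    calc (l : X → X) (f₀ (f a)) = f₀ ((l : X → X) (f a)) := hc _ l.2 f₀ hf₀ (f a)
      _ = f₀ (f ((l : X → X) a)) := congrArg f₀ (hc _ l.2 f hf a)
      _ = f₀ (f ((k : X → X) b)) := by rw [h']
      _ = f₀ ((k : X → X) (f b)) := congrArg f₀ (hc _ k.2 f hf b).symm
      _ = (k : X → X) (f₀ (f b)) := (hc _ k.2 f₀ hf₀ (f b)).symm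
  set F' : Quot (PQRel S) → Quot (PQRel S) :=
    Quot.lift (fun p : X × S => Quot.mk (PQRel S) (f' p.1, p.2)) hwd with hF'def
  have hF'act : IsAct S f' F' := fun x k => rfl
  -- from ι y = Quot.mk (f₀ x, k), deduce k y = f₀ x
  have hkey : ∀ (y x : X) (k : S), ι y = Quot.mk (PQRel S) (f₀ x, k) →
      (k : X → X) y = f₀ x := by
    intro y x k hyx
    rw [hι y k] at hyx
    exact hinj _ k.2 (hmk _ _ hyx)
  -- the core pointwise identity
  have core : ∀ (x : X) (k : S),
      f ((k : X → X) (g (f₀ x))) = (k : X → X) (f₀ (f (g x))) := by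
    intro x k
    calc f ((k : X → X) (g (f₀ x)))
        = f (g ((k : X → X) (f₀ x))) := congrArg f (hc _ k.2 g hg (f₀ x))
      _ = f (g (f₀ ((k : X → X) x))) := congrArg (fun w => f (g w)) (hc _ k.2 f₀ hf₀ x)
      _ = f (f₀ (g ((k : X → X) x))) := congrArg f (hc g hg f₀ hf₀ _)
      _ = f₀ (f (g ((k : X → X) x))) := hc f hf f₀ hf₀ _
      _ = f₀ (f ((k : X → X) (g x))) := congrArg (fun w => f₀ (f w)) (hc g hg _ k.2 x)
      _ = f₀ ((k : X → X) (f (g x))) := congrArg f₀ (hc f hf _ k.2 (g x))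
      _ = (k : X → X) (f₀ (f (g x))) := hc f₀ hf₀ _ k.2 (f (g x))
  -- the key set identity
  have hset : F' '' (H '' A) = ι '' (g '' E) := by
    apply Set.Subset.antisymm
    · rintro _ ⟨_, ⟨a, ha, rfl⟩, rfl⟩
      obtain ⟨⟨x, k⟩, rfl⟩ := Quot.exists_rep a
      have hFa : Quot.mk (PQRel S) (f₀ x, k) ∈ F '' A := by
        rw [← hF x k]; exact ⟨_, ha, rfl⟩
      obtain ⟨y, hy⟩ := hFsub hFa
      have hyE : y ∈ E := by rw [hE, Set.mem_preimage, hy]; exact hFa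
      have hyx : (k : X → X) y = f₀ x := hkey y x k hy
      have h1 : (k : X → X) (g y) = g (f₀ x) := by rw [hc _ k.2 g hg y, hyx]
      refine ⟨g y, ⟨y, hyE, rfl⟩, ?_⟩
      rw [hHdef x k, hι (g y) k]
      apply Quot.sound
      show (f ∘ (k : X → X)) ((k : X → X) (g y)) = (k : X → X) (f' (g x))
      rw [h1]
      exact core x k
    · rintro _ ⟨_, ⟨y, hyE, rfl⟩, rfl⟩
      have hyF : ι y ∈ F '' A := hyE
      obtain ⟨a, ha, hFa⟩ := hyF
      obtain ⟨⟨x, k⟩, rfl⟩ := Quot.exists_rep a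
      rw [hF x k] at hFa
      have hyx : (k : X → X) y = f₀ x := hkey y x k hFa.symm
      have h1 : (k : X → X) (g y) = g (f₀ x) := by rw [hc _ k.2 g hg y, hyx]
      refine ⟨H (Quot.mk (PQRel S) (x, k)), ⟨_, ha, rfl⟩, ?_⟩
      rw [hHdef x k, hι (g y) k]
      apply Quot.sound
      show (k : X → X) (f' (g x)) = (f ∘ (k : X → X)) ((k : X → X) (g y))
      rw [h1]
      exact (core x k).symm
  refine ⟨f', hf', F', hF'act, ?_, ?_⟩
  · rw [hset]; exact Set.image_subset_range ι _
  · rw [hset, Set.preimage_image_eq _ hιinj]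
    exact himg g hg E hFmeas
end

section
/- The collection B = {A ⊆ P(X,S) : f(A) ⊆ X and f(A) ∈ Σ for some f ∈ S} is closed under finite unions and set differences, i.e., B is a ring of sets. -/
lemma PQRel_equiv {X : Type*} (S : Set (X → X))
    (hinj : ∀ f ∈ S, Function.Injective f)
    (hcomm : ∀ f ∈ S, ∀ g ∈ S, f ∘ g = g ∘ f) :
    Equivalence (PQRel S) := by
  constructor
  · intro a; rfl
  · intro a b h; exact h.symm
  · rintro ⟨x, g⟩ ⟨y, h⟩ ⟨z, k⟩ h1 h2
    -- h1 : h y? no: PQRel (x,g) (y,h) : h x = g y ; h2 : k y = h z ; goal : k x = g z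
    simp only [PQRel] at h1 h2 ⊢
    apply hinj h h.2
    calc (h : X → X) ((k : X → X) x)
        = (k : X → X) ((h : X → X) x) := congrFun (hcomm h h.2 k k.2) x
      _ = (k : X → X) ((g : X → X) y) := by rw [h1]
      _ = (g : X → X) ((k : X → X) y) := congrFun (hcomm k k.2 g g.2) y
      _ = (g : X → X) ((h : X → X) z) := by rw [h2]
      _ = (h : X → X) ((g : X → X) z) := congrFun (hcomm g g.2 h h.2) z

/-- `B` is closed under finite unions and set differences,
i.e. `B` is a ring of sets. -/
theorem B_is_ring_of_sets {X : Type*} [MeasurableSpace X] (S : Set (X → X))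
    (hinj : ∀ f ∈ S, Function.Injective f)
    (hcomp : ∀ f ∈ S, ∀ g ∈ S, f ∘ g ∈ S)
    (hcomm : ∀ f ∈ S, ∀ g ∈ S, f ∘ g = g ∘ f)
    (hmeas : ∀ f ∈ S, Measurable f)
    (himg : ∀ f ∈ S, ∀ E : Set X, MeasurableSet E → MeasurableSet (f '' E))
    (ι : X → Quot (PQRel S)) (hι : IsIota S ι)
    (A B : Set (Quot (PQRel S))) (hA : MemB S ι A) (hB : MemB S ι B) :
    MemB S ι (A ∪ B) ∧ MemB S ι (A \ B) := by
  obtain ⟨f, hf, F, hF, hFA, hFAm⟩ := hA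
  obtain ⟨g, hg, G, hG, hGB, hGBm⟩ := hB
  have hequiv := PQRel_equiv S hinj hcomm
  have mk_eq : ∀ {a b : X × S}, Quot.mk (PQRel S) a = Quot.mk (PQRel S) b → PQRel S a b := by
    intro a b h
    exact hequiv.eqvGen_iff.mp (Quot.eq.mp h)
  -- injectivity of ι
  have hιinj : Function.Injective ι := by
    intro x x' h
    rw [hι x ⟨f, hf⟩, hι x' ⟨f, hf⟩] at h
    have := mk_eq h
    simp only [PQRel] at this
    exact hinj f hf (hinj f hf this)
  -- G and F intertwine with ι
  have hGι : ∀ y, G (ι y) = ι (g y) := by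
    intro y
    rw [hι y ⟨g, hg⟩, hG, hι (g y) ⟨g, hg⟩]
  have hFι : ∀ y, F (ι y) = ι (f y) := by
    intro y
    rw [hι y ⟨f, hf⟩, hF, hι (f y) ⟨f, hf⟩]
  -- F and G commute
  have hFG : ∀ q, F (G q) = G (F q) := by
    intro q
    induction q using Quot.ind with
    | _ a =>
      obtain ⟨x, h⟩ := a
      rw [hG, hF, hF, hG]
      exact congrArg (fun z => Quot.mk (PQRel S) (z, h)) (congrFun (hcomm f hf g hg) x)
  -- injectivity of actions
  have act_inj : ∀ (u : X → X), u ∈ S → ∀ U, IsAct S u U → Function.Injective U := by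
    intro u hu U hU q q' h
    induction q using Quot.ind with
    | _ a =>
      induction q' using Quot.ind with
      | _ b =>
        obtain ⟨x, k⟩ := a
        obtain ⟨x', k'⟩ := b
        rw [hU, hU] at h
        have h2 := mk_eq h
        simp only [PQRel] at h2
        apply Quot.sound
        show (k' : X → X) x = (k : X → X) x'
        apply hinj u hu
        calc u ((k' : X → X) x) = (k' : X → X) (u x) := congrFun (hcomm u hu k' k'.2) x
          _ = (k : X → X) (u x') := h2
          _ = u ((k : X → X) x') := (congrFun (hcomm u hu k k.2) x').symm
  have hFinj : Function.Injective F := act_inj f hf F hF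
  have hGinj : Function.Injective G := act_inj g hg G hG
  set C : Set X := ι ⁻¹' (F '' A) with hC
  set D : Set X := ι ⁻¹' (G '' B) with hD
  have hCim : ι '' C = F '' A := Set.image_preimage_eq_of_subset hFA
  have hDim : ι '' D = G '' B := Set.image_preimage_eq_of_subset hGB
  have hH : IsAct S (g ∘ f) (G ∘ F) := by
    intro x k
    show G (F (Quot.mk (PQRel S) (x, k))) = _
    rw [hF, hG]
    rfl
  have hgf : g ∘ f ∈ S := hcomp g hg f hf
  have hHinj : Function.Injective (G ∘ F) := hGinj.comp hFinj
  have hHA : (G ∘ F) '' A = ι '' (g '' C) := by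
    rw [Set.image_comp, ← hCim, Set.image_image, Set.image_image]
    exact Set.image_congr fun y _ => hGι y
  have hHB : (G ∘ F) '' B = ι '' (f '' D) := by
    have h1 : (G ∘ F) '' B = F '' (G '' B) := by
      rw [Set.image_comp, Set.image_image, Set.image_image]
      exact Set.image_congr fun q _ => (hFG q).symm
    rw [h1, ← hDim, Set.image_image, Set.image_image]
    exact Set.image_congr fun y _ => hFι y
  constructor
  · refine ⟨g ∘ f, hgf, G ∘ F, hH, ?_, ?_⟩
    · rw [Set.image_union, hHA, hHB, ← Set.image_union]
      exact Set.image_subset_range ι _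
    · rw [Set.image_union, hHA, hHB, ← Set.image_union, Set.preimage_image_eq _ hιinj]
      exact (himg g hg C hFAm).union (himg f hf D hGBm)
  · refine ⟨g ∘ f, hgf, G ∘ F, hH, ?_, ?_⟩
    · rw [Set.image_diff hHinj, hHA, hHB, ← Set.image_diff hιinj]
      exact Set.image_subset_range ι _
    · rw [Set.image_diff hHinj, hHA, hHB, ← Set.image_diff hιinj,
        Set.preimage_image_eq _ hιinj]
      exact (himg g hg C hFAm).diff (himg f hf D hGBm)
end

section
/- The measure ν on B extends μ: for every E ∈ Σ, ι(E) ∈ B and ν(ι(E)) = μ(E). -/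
open MeasureTheory

/-- `ν` extends `μ`: for every `E ∈ Σ`, `ι(E) ∈ B` and
`ν(ι(E)) = μ(E)`. -/
theorem nu_extends_mu {X : Type*} [MeasurableSpace X] (μ : Measure X)
    (S : Set (X → X)) (hne : S.Nonempty)
    (hinj : ∀ f ∈ S, Function.Injective f)
    (hcomp : ∀ f ∈ S, ∀ g ∈ S, f ∘ g ∈ S)
    (hcomm : ∀ f ∈ S, ∀ g ∈ S, f ∘ g = g ∘ f)
    (hmeas : ∀ f ∈ S, Measurable f)
    (himg : ∀ f ∈ S, ∀ E : Set X, MeasurableSet E → MeasurableSet (f '' E))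
    (hhom : ∀ f ∈ S, ∃ α : ENNReal, 0 < α ∧ α ≠ ⊤ ∧
      ∀ E : Set X, MeasurableSet E → μ (f '' E) = α * μ E)
    (ι : X → Quot (PQRel S)) (hι : IsIota S ι)
    (ν : Set (Quot (PQRel S)) → ENNReal)
    (hν : ∀ (B : Set (Quot (PQRel S))) (f : X → X), f ∈ S →
      ∀ (α : ENNReal), 0 < α → α ≠ ⊤ →
      (∀ E : Set X, MeasurableSet E → μ (f '' E) = α * μ E) →
      ∀ F : Quot (PQRel S) → Quot (PQRel S), IsAct S f F →
      F '' B ⊆ Set.range ι → MeasurableSet (ι ⁻¹' (F '' B)) →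
      ν B = μ (ι ⁻¹' (F '' B)) / α)
    (E : Set X) (hE : MeasurableSet E) :
    MemB S ι (ι '' E) ∧ ν (ι '' E) = μ E := by

  obtain ⟨f, hf⟩ := hne
  -- ι is injective
  have hιinj : Function.Injective ι := by
    intro x y hxy
    rw [hι x ⟨f, hf⟩, hι y ⟨f, hf⟩] at hxy
    have hequiv : Equivalence (PQRel S) := by
      constructor
      · intro a; rfl
      · intro a b hab; exact hab.symm
      · intro a b c hab hbc
        have := hinj b.2 b.2.2
        apply this
        have h1 : (b.2 : X → X) ((c.2 : X → X) a.1)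
            = (c.2 : X → X) ((b.2 : X → X) a.1) := by
          have := hcomm b.2 b.2.2 c.2 c.2.2
          exact congrFun this a.1
        have h2 : (b.2 : X → X) ((a.2 : X → X) c.1)
            = (a.2 : X → X) ((b.2 : X → X) c.1) := by
          have := hcomm b.2 b.2.2 a.2 a.2.2
          exact congrFun this c.1
        calc (b.2 : X → X) ((c.2 : X → X) a.1)
            = (c.2 : X → X) ((b.2 : X → X) a.1) := h1
          _ = (c.2 : X → X) ((a.2 : X → X) b.1) := by rw [hab]
          _ = (a.2 : X → X) ((c.2 : X → X) b.1) := by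
              have := hcomm c.2 c.2.2 a.2 a.2.2
              exact congrFun this b.1
          _ = (a.2 : X → X) ((b.2 : X → X) c.1) := by rw [hbc]
          _ = (b.2 : X → X) ((a.2 : X → X) c.1) := h2.symm
    have hrel := hequiv.eqvGen_iff.mp (Quot.eqvGen_exact hxy)
    simp only [PQRel] at hrel
    exact hinj f hf (hinj f hf hrel)
  -- the action F
  have hFwd : ∀ a b : X × S, PQRel S a b → PQRel S (f a.1, a.2) (f b.1, b.2) := by
    intro a b hab
    show (b.2 : X → X) (f a.1) = (a.2 : X → X) (f b.1)
    have h1 := congrFun (hcomm (b.2 : X → X) b.2.2 f hf) a.1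
    have h2 := congrFun (hcomm (a.2 : X → X) a.2.2 f hf) b.1
    simp only [Function.comp] at h1 h2
    calc (b.2 : X → X) (f a.1) = f ((b.2 : X → X) a.1) := h1
      _ = f ((a.2 : X → X) b.1) := by rw [hab]
      _ = (a.2 : X → X) (f b.1) := h2.symm
  set F : Quot (PQRel S) → Quot (PQRel S) :=
    Quot.map (fun p => (f p.1, p.2)) hFwd with hFdef
  have hact : IsAct S f F := fun x g => rfl
  have hFι : ∀ x : X, F (ι x) = ι (f x) := by
    intro x
    rw [hι x ⟨f, hf⟩, hι (f x) ⟨f, hf⟩]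
    rfl
  have himage : F '' (ι '' E) = ι '' (f '' E) := by
    rw [Set.image_image, Set.image_image]
    exact Set.image_congr (fun x _ => hFι x)
  have hsub : F '' (ι '' E) ⊆ Set.range ι := by
    rw [himage]; exact Set.image_subset_range _ _
  have hpre : ι ⁻¹' (F '' (ι '' E)) = f '' E := by
    rw [himage, Set.preimage_image_eq _ hιinj]
  have hmeasE : MeasurableSet (ι ⁻¹' (F '' (ι '' E))) := by
    rw [hpre]; exact himg f hf E hE
  obtain ⟨α, hα0, hαtop, hα⟩ := hhom f hf
  refine ⟨⟨f, hf, F, hact, hsub, hmeasE⟩, ?_⟩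
  rw [hν (ι '' E) f hf α hα0 hαtop hα F hact hsub hmeasE, hpre, hα E hE,
    mul_comm α (μ E), mul_div_assoc, ENNReal.div_self hα0.ne' hαtop, mul_one]
end

section
/- If S is a commutative semigroup of injective maps on X and f, g, h ∈ S, then for any subset A of the pseudoquotient space with h(A) ⊆ X and h(A) ∈ Σ, the set (g∘h)((f∘g⁻¹)(A)) equals (f∘h)(A); in particular (f∘g⁻¹)(A) ∈ B. -/
/-- for `f, g, h ∈ S` and `A ⊆ P(X,S)` with `h(A) ⊆ X`,
`h(A) ∈ Σ`, we have `(g∘h)((f∘g⁻¹)(A)) = (f∘h)(A)`; in particular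
`(f∘g⁻¹)(A) ∈ B`. -/
theorem comp_image_eq_and_memB {X : Type*} [MeasurableSpace X]
    (S : Set (X → X))
    (hinj : ∀ f ∈ S, Function.Injective f)
    (hcomp : ∀ f ∈ S, ∀ g ∈ S, f ∘ g ∈ S)
    (hcomm : ∀ f ∈ S, ∀ g ∈ S, f ∘ g = g ∘ f)
    (hmeas : ∀ f ∈ S, Measurable f)
    (himg : ∀ f ∈ S, ∀ E : Set X, MeasurableSet E → MeasurableSet (f '' E))
    (ι : X → Quot (PQRel S)) (hι : IsIota S ι)
    (f g h : X → X) (hf : f ∈ S) (hg : g ∈ S) (hh : h ∈ S)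
    -- `H` is the map `f ∘ g⁻¹` of the group `G`: `H [(x,k)] = [(f x, g ∘ k)]`
    (H : Quot (PQRel S) → Quot (PQRel S))
    (hH : ∀ (x : X) (k : S), H (Quot.mk (PQRel S) (x, k)) =
      Quot.mk (PQRel S) (f x, ⟨g ∘ (k : X → X), hcomp g hg _ k.2⟩))
    (Fgh : Quot (PQRel S) → Quot (PQRel S)) (hFgh : IsAct S (g ∘ h) Fgh)
    (Ffh : Quot (PQRel S) → Quot (PQRel S)) (hFfh : IsAct S (f ∘ h) Ffh)
    (Fh : Quot (PQRel S) → Quot (PQRel S)) (hFh : IsAct S h Fh)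
    (A : Set (Quot (PQRel S)))
    (hA : Fh '' A ⊆ Set.range ι) (hAmeas : MeasurableSet (ι ⁻¹' (Fh '' A))) :
    Fgh '' (H '' A) = Ffh '' A ∧ MemB S ι (H '' A) := by
  have comm : ∀ p ∈ S, ∀ q ∈ S, ∀ x : X, p (q x) = q (p x) :=
    fun p hp q hq x => congrFun (hcomm p hp q hq) x
  have hequiv : Equivalence (PQRel S) := by
    constructor
    · intro a; rfl
    · intro a b hab; exact hab.symm
    · intro a b c hab hbc
      apply hinj b.2 b.2.2
      calc (b.2 : X → X) ((c.2 : X → X) a.1)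
          = (c.2 : X → X) ((b.2 : X → X) a.1) := comm _ b.2.2 _ c.2.2 _
        _ = (c.2 : X → X) ((a.2 : X → X) b.1) := by rw [hab]
        _ = (a.2 : X → X) ((c.2 : X → X) b.1) := comm _ c.2.2 _ a.2.2 _
        _ = (a.2 : X → X) ((b.2 : X → X) c.1) := by rw [hbc]
        _ = (b.2 : X → X) ((a.2 : X → X) c.1) := comm _ a.2.2 _ b.2.2 _
  have exact : ∀ (x y : X) (k l : S),
      Quot.mk (PQRel S) (x, k) = Quot.mk (PQRel S) (y, l) →
      (l : X → X) x = (k : X → X) y := by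
    intro x y k l hxy
    exact (hequiv.eqvGen_iff).mp (Quot.eqvGen_exact hxy)
  have ιinj : Function.Injective ι := by
    intro x y hxy
    rw [hι x ⟨f, hf⟩, hι y ⟨f, hf⟩] at hxy
    exact hinj f hf (hinj f hf (exact _ _ _ _ hxy))
  have key : ∀ a, Fgh (H a) = Ffh a := by
    intro a
    induction a using Quot.ind with
    | _ p =>
      obtain ⟨x, k⟩ := p
      rw [hH, hFgh, hFfh]
      apply Quot.sound
      show (k : X → X) ((g ∘ h) (f x)) = (g ∘ (k : X → X)) ((f ∘ h) x)
      simp only [Function.comp_apply]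
      rw [comm f hf h hh x, comm _ k.2 g hg]
  have eq1 : Fgh '' (H '' A) = Ffh '' A := by
    rw [Set.image_image]
    exact Set.image_congr fun a _ => key a
  set E : Set X := ι ⁻¹' (Fh '' A) with hE
  have step : ∀ a ∈ A, ∀ y : X, ι y = Fh a → Ffh a = ι (f y) := by
    intro a ha y hy
    obtain ⟨⟨x, k⟩, rfl⟩ := Quot.exists_rep a
    rw [hFh] at hy
    rw [hι y k] at hy
    have hky : (k : X → X) y = h x := hinj _ k.2 (exact _ _ _ _ hy)
    rw [hFfh, hι (f y) k]
    apply Quot.sound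
    show (k : X → X) ((f ∘ h) x) = (k : X → X) ((k : X → X) (f y))
    have : (f ∘ h) x = (k : X → X) (f y) := by
      simp only [Function.comp_apply]
      rw [← hky, comm f hf _ k.2]
    rw [this]
  have eq2 : Ffh '' A = ι '' (f '' E) := by
    ext z; constructor
    · rintro ⟨a, ha, rfl⟩
      obtain ⟨y, hy⟩ := hA ⟨a, ha, rfl⟩
      have hyE : y ∈ E := by show ι y ∈ Fh '' A; rw [hy]; exact ⟨a, ha, rfl⟩
      rw [step a ha y hy]
      exact ⟨f y, ⟨y, hyE, rfl⟩, rfl⟩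
    · rintro ⟨_, ⟨y, hyE, rfl⟩, rfl⟩
      obtain ⟨a, ha, hay⟩ := hyE
      exact ⟨a, ha, step a ha y hay.symm⟩
  refine ⟨eq1, g ∘ h, hcomp g hg h hh, Fgh, hFgh, ?_, ?_⟩
  · rw [eq1, eq2]
    rintro z ⟨y, _, rfl⟩
    exact ⟨y, rfl⟩
  · rw [eq1, eq2, Set.preimage_image_eq _ ιinj]
    exact himg f hf E hAmeas
end
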